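/- Let G be a finite abelian group (written additively) and let A = { t_g : g ∈ G } ≤ Sym(G) be its regular permutation group, where t_g(x) = x + g. If g + g = 0 for every g ∈ G (i.e., G is an elementary abelian 2-group), then A is the automorphism group of a 4-coloured graph on G (A ∈ GR(4)); otherwise A is not the automorphism group of any coloured graph on G (A ∉ GR). -/

import Mathlib

/-- The orbit of a point `x` under a set `G` of permutations of `X`. -/
def orbitOf {X : Type*} (G : Set (Equiv.Perm X)) (x : X) : Set X :=
  {y | ∃ a ∈ G, a x = y}

/-- A permutation `σ` is 2-orbit-compatible with `G` if for every pair of orbits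
`O` and `Q` of `G` there is an element of `G` agreeing with `σ` on `O ∪ Q`. -/
def TwoOrbitCompatible {X : Type*} (G : Set (Equiv.Perm X)) (σ : Equiv.Perm X) : Prop :=
  ∀ x y : X, ∃ a ∈ G, ∀ z ∈ orbitOf G x ∪ orbitOf G y, σ z = a z

/-- A subgroup `A ≤ Sym(X)` is 2-orbit-closed if every permutation that is
2-orbit-compatible with `A` belongs to `A`. -/
def TwoOrbitClosed {X : Type*} (A : Subgroup (Equiv.Perm X)) : Prop :=
  ∀ σ : Equiv.Perm X, TwoOrbitCompatible (A : Set (Equiv.Perm X)) σ → σ ∈ A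

/-- `A` is precisely the automorphism group of the `k`-coloured graph `γ` on `X`. -/
def IsColGraphAutGroup {X : Type*} {k : ℕ} (γ : Sym2 X → Fin k)
    (A : Subgroup (Equiv.Perm X)) : Prop :=
  ∀ σ : Equiv.Perm X, σ ∈ A ↔ ∀ x y : X, x ≠ y → γ s(σ x, σ y) = γ s(x, y)

/-- `A ∈ GR`: `A` is the automorphism group of some coloured graph on `X`. -/
def InGR {X : Type*} (A : Subgroup (Equiv.Perm X)) : Prop :=
  ∃ k : ℕ, 1 ≤ k ∧ ∃ γ : Sym2 X → Fin k, IsColGraphAutGroup γ A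

/-- `A ∈ GR(4)`: `A` is the automorphism group of some 4-coloured graph on `X`. -/
def InGR4 {X : Type*} (A : Subgroup (Equiv.Perm X)) : Prop :=
  ∃ γ : Sym2 X → Fin 4, IsColGraphAutGroup γ A

/-- The regular permutation group of a finite abelian group `G`: the subgroup of
`Sym(G)` consisting of all translations `t_g : x ↦ x + g`. -/
def translations (G : Type*) [AddCommGroup G] : Subgroup (Equiv.Perm G) where
  carrier := {σ | ∃ g : G, σ = Equiv.addRight g}
  one_mem' := ⟨0, by ext x; simp⟩
  mul_mem' := by
    rintro σ τ ⟨g, rfl⟩ ⟨h, rfl⟩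
    exact ⟨h + g, by ext x; simp [add_assoc]⟩
  inv_mem' := by
    rintro σ ⟨g, rfl⟩
    exact ⟨-g, by ext x; simp⟩

section Aux

lemma zmod2_eq_one {a : ZMod 2} (h : a ≠ 0) : a = 1 := by revert h; revert a; decide

variable {G : Type*} [AddCommGroup G] [Module (ZMod 2) G] {n : ℕ} (b : Module.Basis (Fin n) (ZMod 2) G)

lemma char2_add_self (x : G) : x + x = 0 := by
  have h : (2 : ZMod 2) = 0 := by decide
  have : ((2 : ZMod 2)) • x = 0 := by rw [h, zero_smul]
  simpa [two_smul] using this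

lemma char2_cancel {x y z : G} (h : x + y = z) : x = z + y := by
  rw [← h, add_assoc, char2_add_self, add_zero]

lemma char2_eq_of_add_eq_zero {x y : G} (h : x + y = 0) : x = y := by
  simpa using char2_cancel h

open Classical in
noncomputable def cb (x : G) : Fin 4 :=
  if ∃ i : Fin n, x = b i ∧ (i : ℕ) = 0 then 0
  else if ∃ i : Fin n, x = b i then 1
  else if ∃ i : Fin n, ∃ h : (i : ℕ) + 1 < n, x = b i + b ⟨(i : ℕ) + 1, h⟩ then 2
  else 3

lemma b_add_ne_b {i j k : Fin n} (hij : i ≠ j) : b i + b j ≠ b k := by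
  intro h
  have h' := congrArg b.repr h
  simp only [map_add, Module.Basis.repr_self] at h'
  have hi := DFunLike.congr_fun h' i
  have hj := DFunLike.congr_fun h' j
  simp only [Finsupp.add_apply, Finsupp.single_apply, if_pos rfl, if_neg hij.symm,
    add_zero, zero_add, if_neg hij] at hi hj
  have hki : k = i := by by_contra hc; simp [if_neg hc] at hi
  have hkj : k = j := by by_contra hc; simp [if_neg hc] at hj
  exact hij (hki ▸ hkj)

lemma b_add_ne_zero {i j : Fin n} (hij : i ≠ j) : b i + b j ≠ 0 := by
  intro h
  have h' := congrArg b.repr h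
  simp only [map_add, Module.Basis.repr_self, map_zero] at h'
  have hi := DFunLike.congr_fun h' i
  simp [Finsupp.single_apply, hij, hij.symm] at hi

lemma b_pair_eq {i j k l : Fin n} (hij : i ≠ j) (hkl : k ≠ l)
    (h : b i + b j = b k + b l) : (i = k ∧ j = l) ∨ (i = l ∧ j = k) := by
  have h' := congrArg b.repr h
  simp only [map_add, Module.Basis.repr_self] at h'
  have key : ∀ m : Fin n, (m = i ∨ m = j) → (m = k ∨ m = l) := by
    intro m hm'
    have hm := DFunLike.congr_fun h' m
    rcases hm' with rfl | rfl <;> by_contra hc <;> push_neg at hc <;>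
      simp [Finsupp.single_apply, hij, hij.symm, Ne.symm hc.1, Ne.symm hc.2] at hm
  have hi := key i (Or.inl rfl)
  have hj := key j (Or.inr rfl)
  rcases hi with rfl | rfl
  · rcases hj with rfl | rfl
    · exact absurd rfl hij
    · exact Or.inl ⟨rfl, rfl⟩
  · rcases hj with rfl | rfl
    · exact Or.inr ⟨rfl, rfl⟩
    · exact absurd rfl hij

-- values of cb
lemma cb_b_zero {i : Fin n} (hi : (i : ℕ) = 0) : cb b (b i) = 0 := by
  unfold cb; rw [if_pos ⟨i, rfl, hi⟩]

lemma cb_b_pos {i : Fin n} (hi : (i : ℕ) ≠ 0) : cb b (b i) = 1 := by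
  unfold cb
  rw [if_neg, if_pos ⟨i, rfl⟩]
  rintro ⟨j, hj, hj0⟩
  exact hi (by rw [b.injective hj, hj0])

lemma cb_adj {i : Fin n} (h : (i : ℕ) + 1 < n) :
    cb b (b i + b ⟨(i : ℕ) + 1, h⟩) = 2 := by
  have hne : i ≠ (⟨(i : ℕ) + 1, h⟩ : Fin n) := by
    intro hc
    have : (i : ℕ) = (i : ℕ) + 1 := congrArg Fin.val hc
    omega
  unfold cb
  rw [if_neg, if_neg, if_pos ⟨i, h, rfl⟩]
  · rintro ⟨j, hj⟩; exact b_add_ne_b b hne hj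
  · rintro ⟨j, hj, -⟩; exact b_add_ne_b b hne hj

lemma eq_b_of_cb_zero {x : G} (h : cb b x = 0) : ∃ i : Fin n, x = b i ∧ (i : ℕ) = 0 := by
  by_contra hc
  unfold cb at h
  rw [if_neg hc] at h
  split_ifs at h <;> exact absurd h (by decide)

lemma mem_range_of_cb {x : G} (h : cb b x = 0 ∨ cb b x = 1) : ∃ i : Fin n, x = b i := by
  unfold cb at h
  split_ifs at h with h1 h2
  · exact ⟨h1.choose, h1.choose_spec.1⟩
  · exact h2
  · rcases h with h | h <;> exact absurd h (by decide)
  · rcases h with h | h <;> exact absurd h (by decide)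

lemma adj_of_cb_two {x : G} (h : cb b x = 2) :
    ∃ i : Fin n, ∃ hi : (i : ℕ) + 1 < n, x = b i + b ⟨(i : ℕ) + 1, hi⟩ := by
  unfold cb at h
  split_ifs at h with h1 h2 h3
  · exact absurd h (by decide)
  · exact absurd h (by decide)
  · exact h3
  · exact absurd h (by decide)


lemma eq_sum_support (x : G) : x = ∑ i ∈ (b.repr x).support, b i := by
  conv_lhs => rw [← b.sum_repr x]
  rw [← Finset.sum_subset (Finset.subset_univ (b.repr x).support)
    (fun i _ hi => by
      rw [Finsupp.notMem_support_iff.mp hi, zero_smul])]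
  exact Finset.sum_congr rfl fun i hi => by
    rw [zmod2_eq_one (Finsupp.mem_support_iff.mp hi), one_smul]

lemma support_add_b {x : G} {i : Fin n} (hi : i ∈ (b.repr x).support) :
    (b.repr (x + b i)).support = (b.repr x).support.erase i := by
  ext j
  simp only [Finsupp.mem_support_iff, map_add, Module.Basis.repr_self, Finsupp.add_apply,
    Finset.mem_erase]
  rcases eq_or_ne j i with rfl | hj
  · simp only [Finsupp.single_apply, if_pos rfl]
    rw [zmod2_eq_one (Finsupp.mem_support_iff.mp hi)]
    simp only [ne_eq, not_true_eq_false, false_and, iff_false]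
    intro hc
    exact hc (by decide)
  · simp [Finsupp.single_apply, Ne.symm hj, hj]


lemma cb_b_or (i : Fin n) : cb b (b i) = 0 ∨ cb b (b i) = 1 := by
  rcases eq_or_ne (i : ℕ) 0 with h | h
  · exact Or.inl (cb_b_zero b h)
  · exact Or.inr (cb_b_pos b h)

variable (σ : Equiv.Perm G) (h0 : σ 0 = 0)
    (H : ∀ x y : G, x ≠ y → cb b (σ x + σ y) = cb b (x + y))

include h0 H in
lemma rigid_basis : ∀ m : ℕ, ∀ hm : m < n, σ (b ⟨m, hm⟩) = b ⟨m, hm⟩ := by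
  have H0 : ∀ x : G, x ≠ 0 → cb b (σ x) = cb b x := by
    intro x hx
    have := H x 0 hx
    simpa [h0] using this
  intro m
  induction m using Nat.strong_induction_on with
  | _ m IH =>
  intro hm
  rcases m with _ | m
  · have h1 : cb b (σ (b ⟨0, hm⟩)) = 0 := by
      rw [H0 (b ⟨0, hm⟩) (b.ne_zero _), cb_b_zero b rfl]
    obtain ⟨j, hj, hj0⟩ := eq_b_of_cb_zero b h1
    rw [hj]
    congr 1
    exact Fin.ext hj0
  · have hmn : m < n := by omega
    have hprev : σ (b ⟨m, hmn⟩) = b ⟨m, hmn⟩ := IH m (by omega) hmn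
    set i : Fin n := ⟨m, hmn⟩
    set i' : Fin n := ⟨m + 1, hm⟩
    have hc1 : cb b (σ (b i')) = cb b (b i') := H0 _ (b.ne_zero _)
    have hcb1 : cb b (b i') = 1 := cb_b_pos b (by simp [i'])
    obtain ⟨j, hj⟩ := mem_range_of_cb b (Or.inr (hc1.trans hcb1))
    have hii' : i' ≠ i := by
      intro hc
      have := congrArg Fin.val hc
      simp [i, i'] at this
    have hne : b i' ≠ b i := fun hc => hii' (b.injective hc)
    have h2 : cb b (σ (b i') + σ (b i)) = cb b (b i' + b i) := H _ _ hne
    have hadj : cb b (b i' + b i) = 2 := by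
      rw [add_comm]
      exact cb_adj b (i := i) hm
    rw [hprev, hj] at h2
    obtain ⟨k, hk, hkk⟩ := adj_of_cb_two b (h2.trans hadj)
    have hkne : k ≠ (⟨(k : ℕ) + 1, hk⟩ : Fin n) := by
      intro hc
      have := congrArg Fin.val hc
      simp at this
    have hji : j ≠ i := by
      intro hc
      rw [hc, char2_add_self] at hkk
      exact b_add_ne_zero b hkne hkk.symm
    rcases b_pair_eq b hji hkne hkk with ⟨hjk, hik'⟩ | ⟨hjk', hik⟩
    · -- j = k, i = ⟨k+1⟩  → m = k+1, j = m-1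
      have hmk : m = (k : ℕ) + 1 := by
        have := congrArg Fin.val hik'
        simpa [i] using this
      have hmpos : 1 ≤ m := by omega
      have hjm : (j : ℕ) = m - 1 := by
        have := congrArg Fin.val hjk
        omega
      have hj' : σ (b j) = b j := by
        have := IH (j : ℕ) (by omega) (by omega)
        simpa [Fin.eta] using this
      have : b i' = b j := σ.injective (by rw [hj, hj'])
      have := congrArg Fin.val (b.injective this)
      simp [i'] at this
      omega
    · -- j = ⟨k+1⟩, i = k → j = m+1 = i'
      have hkm : (k : ℕ) = m := by
        have := congrArg Fin.val hik
        simpa [i] using this.symm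
      have : j = i' := by
        apply Fin.ext
        have hval := congrArg Fin.val hjk'
        simp at hval
        show (j : ℕ) = m + 1
        omega
      rw [hj, this]

include h0 H in
lemma rigid : ∀ x : G, σ x = x := by
  have key : ∀ N : ℕ, ∀ x : G, (b.repr x).support.card = N → σ x = x := by
    intro N
    induction N using Nat.strong_induction_on with
    | _ N IH =>
    have fixb : ∀ hN : 1 < N, ∀ k : Fin n, σ (b k) = b k := by
      intro hN k
      have hms : ((b.repr (b k)).support).card = 1 := by
        rw [Module.Basis.repr_self, Finsupp.support_single_ne_zero k one_ne_zero,
          Finset.card_singleton]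
      exact IH 1 hN (b k) hms
    intro x hx
    rcases N with _ | _ | _ | N
    · -- card 0
      have h1 : b.repr x = 0 := Finsupp.support_eq_empty.mp (Finset.card_eq_zero.mp hx)
      have hx0 : x = 0 := by
        apply b.repr.injective
        rw [h1, map_zero]
      rw [hx0, h0]
    · -- card 1
      obtain ⟨i, hsupp⟩ := Finset.card_eq_one.mp hx
      have hxe : x = b i := by
        rw [eq_sum_support b x, hsupp, Finset.sum_singleton]
      rw [hxe]
      have := rigid_basis b σ h0 H (i : ℕ) i.isLt
      simpa [Fin.eta] using this
    · -- card 2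
      obtain ⟨i, j, hij, hsupp⟩ := Finset.card_eq_two.mp hx
      have hxe : x = b i + b j := by
        rw [eq_sum_support b x, hsupp, Finset.sum_pair hij]
      have hxne0 : x ≠ 0 := by
        intro hc
        rw [hc] at hx
        simp at hx
      have hσxne0 : σ x ≠ 0 := by
        intro hc
        rw [← h0] at hc
        exact hxne0 (σ.injective hc)
      have hbij : ∀ a c : Fin n, a ≠ c → x ≠ b a → x + b a = b c →
          ∃ d : Fin n, d ≠ a ∧ σ x = b d + b a := by
        intro a c hac hxa hxac
        have h1 := H x (b a) hxa
        rw [fixb (by omega) a, hxac] at h1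
        obtain ⟨d, hd⟩ := mem_range_of_cb b (by
          rcases cb_b_or b c with h | h
          · exact Or.inl (h1.trans h)
          · exact Or.inr (h1.trans h))
        have hσx : σ x = b d + b a := char2_cancel hd
        refine ⟨d, ?_, hσx⟩
        intro hc
        rw [hc, char2_add_self] at hσx
        exact hσxne0 hσx
      have hxi : x + b i = b j := by
        rw [hxe, add_comm (b i) (b j), add_assoc, char2_add_self, add_zero]
      have hxj : x + b j = b i := by
        rw [hxe, add_assoc, char2_add_self, add_zero]
      have hxne_bi : x ≠ b i := by
        intro hc
        rw [hc, char2_add_self] at hxi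
        exact b.ne_zero j hxi.symm
      have hxne_bj : x ≠ b j := by
        intro hc
        rw [hc, char2_add_self] at hxj
        exact b.ne_zero i hxj.symm
      obtain ⟨a, hai, ha⟩ := hbij i j hij hxne_bi hxi
      obtain ⟨d, hdj, hd⟩ := hbij j i (Ne.symm hij) hxne_bj hxj
      have heq : b a + b i = b d + b j := by rw [← ha, ← hd]
      rcases b_pair_eq b hai hdj heq with ⟨-, hij'⟩ | ⟨haj, -⟩
      · exact absurd hij' hij
      · rw [ha, haj, add_comm, ← hxe]
    · -- card ≥ 3
      by_contra hne
      have hd0 : σ x + x ≠ 0 := fun h => hne (char2_eq_of_add_eq_zero h)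
      set S := (b.repr x).support with hS
      have claim : ∀ i ∈ S, ∃ a : Fin n, a ≠ i ∧ σ x + x = b a + b i := by
        intro i hi
        have hz : σ (x + b i) = x + b i := by
          apply IH (N + 2) (by omega)
          rw [support_add_b b hi, ← hS, Finset.card_erase_of_mem hi, hx]
          omega

        have hxz : x ≠ x + b i := by
          intro hc
          exact b.ne_zero i (by rwa [left_eq_add] at hc)
        have h1 := H x (x + b i) hxz
        rw [hz] at h1
        have hxx : x + (x + b i) = b i := by
          rw [← add_assoc, char2_add_self, zero_add]
        rw [hxx] at h1
        obtain ⟨a, ha⟩ := mem_range_of_cb b (by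
          rcases cb_b_or b i with h | h
          · exact Or.inl (h1.trans h)
          · exact Or.inr (h1.trans h))
        have hda : (σ x + x) + b i = b a := by rw [add_assoc]; exact ha
        have hfin : σ x + x = b a + b i := char2_cancel hda
        refine ⟨a, ?_, hfin⟩
        intro hc
        exact hd0 (by rw [hfin, hc, char2_add_self])
      obtain ⟨i1, hi1⟩ := Finset.card_pos.mp (show 0 < S.card by omega)
      obtain ⟨i2, hi2⟩ := Finset.card_pos.mp (show 0 < (S.erase i1).card by
        rw [Finset.card_erase_of_mem hi1]; omega)
      obtain ⟨i3, hi3⟩ := Finset.card_pos.mp (show 0 < ((S.erase i1).erase i2).card by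
        rw [Finset.card_erase_of_mem hi2, Finset.card_erase_of_mem hi1]; omega)
      obtain ⟨hi32, hi3'⟩ := Finset.mem_erase.mp hi3
      obtain ⟨hi31, hi3S⟩ := Finset.mem_erase.mp hi3'
      obtain ⟨hi21, hi2S⟩ := Finset.mem_erase.mp hi2
      obtain ⟨a1, ha1, he1⟩ := claim i1 hi1
      obtain ⟨a2, ha2, he2⟩ := claim i2 hi2S
      obtain ⟨a3, ha3, he3⟩ := claim i3 hi3S
      have h12 : a1 = i2 := by
        rcases b_pair_eq b ha1 ha2 (he1.symm.trans he2) with ⟨-, h⟩ | ⟨h, -⟩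
        · exact absurd h (Ne.symm hi21)
        · exact h
      have h13 : a1 = i3 := by
        rcases b_pair_eq b ha1 ha3 (he1.symm.trans he3) with ⟨-, h⟩ | ⟨h, -⟩
        · exact absurd h (Ne.symm hi31)
        · exact h
      exact hi32 (h13.symm.trans h12)
  intro x
  exact key _ x rfl

end Aux

/-- The regular permutation group of a finite abelian group `G` is the automorphism
group of a 4-coloured graph on `G` if `G` is an elementary abelian 2-group, and is
not the automorphism group of any coloured graph on `G` otherwise. -/

theorem statement13 (G : Type*) [AddCommGroup G] [Fintype G] :
    ((∀ g : G, g + g = 0) → InGR4 (translations G)) ∧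
      ((¬ ∀ g : G, g + g = 0) → ¬ InGR (translations G)) := by
  constructor
  · intro h2
    classical
    letI : Module (ZMod 2) G := AddCommGroup.zmodModule (fun x => by simpa [two_nsmul] using h2 x)
    haveI : Fact (Nat.Prime 2) := ⟨Nat.prime_two⟩
    haveI : Module.Finite (ZMod 2) G := Module.Finite.of_finite
    let b := Module.finBasis (ZMod 2) G
    refine ⟨Sym2.lift ⟨fun x y => cb b (x + y), fun x y => by show cb b (x + y) = cb b (y + x); rw [add_comm]⟩, ?_⟩
    intro σ
    constructor
    · rintro ⟨g, rfl⟩ x y hxy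
      simp only [Sym2.lift_mk, Equiv.coe_addRight]
      congr 1
      rw [show x + g + (y + g) = x + y + (g + g) from by abel, h2 g, add_zero]
    · intro hσ
      set τ : Equiv.Perm G := σ.trans (Equiv.addRight (σ 0)) with hτdef
      have hτ : ∀ x, τ x = σ x + σ 0 := fun x => rfl
      have hτ0 : τ 0 = 0 := by rw [hτ, h2]
      have hH : ∀ x y : G, x ≠ y → cb b (τ x + τ y) = cb b (x + y) := by
        intro x y hxy
        have hsum : τ x + τ y = σ x + σ y := by
          rw [hτ, hτ, show σ x + σ 0 + (σ y + σ 0) = σ x + σ y + (σ 0 + σ 0) from by abel,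
            h2, add_zero]
        rw [hsum]
        simpa [Sym2.lift_mk] using hσ x y hxy
      have hfix := rigid b τ hτ0 hH
      show ∃ g : G, σ = Equiv.addRight g
      refine ⟨σ 0, ?_⟩
      ext x
      show σ x = x + σ 0
      exact char2_cancel (hfix x)
  · intro h hIn
    obtain ⟨k, hk1, γ, hγ⟩ := hIn
    have hν : (Equiv.neg G) ∈ translations G := by
      rw [hγ]
      intro x y hxy
      have ht : Equiv.addRight (-(x + y)) ∈ translations G := ⟨-(x + y), rfl⟩
      have hth := (hγ (Equiv.addRight (-(x + y)))).mp ht x y hxy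
      simp only [Equiv.coe_addRight] at hth
      have e1 : x + -(x + y) = -y := by abel
      have e2 : y + -(x + y) = -x := by abel
      rw [e1, e2] at hth
      show γ s(Equiv.neg G x, Equiv.neg G y) = γ s(x, y)
      simp only [Equiv.neg_apply]
      rw [Sym2.eq_swap]
      exact hth
    obtain ⟨g, hg⟩ := hν
    have hg0 : g = 0 := by
      have h0 := congrArg (fun (e : Equiv.Perm G) => e 0) hg
      simpa using h0.symm
    apply h
    intro x
    have hx := congrArg (fun (e : Equiv.Perm G) => e x) hg
    simp only [hg0, Equiv.neg_apply, Equiv.coe_addRight, add_zero] at hx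
    exact neg_eq_iff_add_eq_zero.mp hx
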